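/- Let V be a graded k-module, and consider the graded algebra k ⊕ s^{-1}V with trivial product (square-zero). The Hochschild homology of k ⊕ s^{-1}V is the direct sum of the invariants of the tensor module TV under the signed cyclic action and the desuspended coinvariants of positive length: HH_*(k ⊕ s^{-1}V) ≅ TV^τ ⊕ (s^{-1} ⊗ 1)(⊕_{n≥1} T^nV_τ), where τ acts on T^nV by τ·[v_1|…|v_n] = (−1)^{|v_n||v_1…v_{n−1}|}[v_n|v_1|…|v_{n−1}], T^nV^τ is the kernel of 1−τ and T^nV_τ the cokernel of 1−τ. -/

import Mathlib

/-!
STATEMENT 12.  Let `V` be a graded `k`-module (modeled as the free module on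
a basis `B` with degree function `deg : B → ℤ`, so that the Koszul signs of
the cyclic operator are defined), and consider the square-zero graded algebra
`k ⊕ s⁻¹V`.  Its Hochschild complex `C(k ⊕ s⁻¹V)` is modeled on the basis
`Option B × List B`: a generator `(o, [b₁,…,bₙ])` is `a[s a₁|…|s aₙ]` where
`a = 1` if `o = none` and `a = s⁻¹ v_b` if `o = some b`, and `a_i = s⁻¹ v_{bᵢ}`
(so `|s aᵢ| = deg bᵢ`).  Since the product is trivial, the Hochschild
differential is as computed in `hhD` below.  Statement:
`HH_*(k ⊕ s⁻¹V) ≅ TV^τ ⊕ (s⁻¹ ⊗ 1)(⊕_{n≥1} TⁿV_τ)`, the invariants of `TV`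
under the signed cyclic action together with the desuspended coinvariants of
positive tensor length.
-/

/-- `(-1)^m`. -/
def sgn (m : ℤ) : ℤ := if Even m then 1 else -1

/-- Total degree of a word. -/
def degW {B : Type*} (deg : B → ℤ) (l : List B) : ℤ := (l.map deg).sum

/-- The signed cyclic operator on the tensor module `TV`:
`τ·[v₁|…|vₙ] = (-1)^{|vₙ||v₁…v_{n-1}|}[vₙ|v₁|…|v_{n-1}]`. -/
noncomputable def cyclicTau {k B : Type*} [CommRing k] (deg : B → ℤ) :
    (List B →₀ k) →ₗ[k] (List B →₀ k) :=
  Finsupp.lift _ k _ fun l =>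
    match l with
    | [] => Finsupp.single [] 1
    | b :: t =>
      sgn (deg ((b :: t).getLast (by simp)) * degW deg (b :: t).dropLast) •
        Finsupp.single ((b :: t).getLast (by simp) :: (b :: t).dropLast) 1

/-- Same operator on words of positive length. -/
noncomputable def cyclicTauPos {k B : Type*} [CommRing k] (deg : B → ℤ) :
    ({l : List B // l ≠ []} →₀ k) →ₗ[k] ({l : List B // l ≠ []} →₀ k) :=
  Finsupp.lift _ k _ fun l =>
    sgn (deg (l.1.getLast l.2) * degW deg l.1.dropLast) •
      Finsupp.single ⟨l.1.getLast l.2 :: l.1.dropLast, by simp⟩ 1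

/-- The Hochschild differential of the square-zero algebra `k ⊕ s⁻¹V` on the
basis of its Hochschild complex.  All terms involving a product of two
elements of `s⁻¹V` vanish; only the two outer face maps applied to chains with
first factor the unit survive. -/
noncomputable def hhD {k B : Type*} [CommRing k] (deg : B → ℤ)
    (g : Option B × List B) : (Option B × List B) →₀ k :=
  match g with
  | (none, b :: l) =>
      Finsupp.single (some b, l) 1
      - sgn (deg ((b :: l).getLast (by simp)) * degW deg (b :: l).dropLast) •
          Finsupp.single (some ((b :: l).getLast (by simp)), (b :: l).dropLast) 1
  | _ => 0

/-- The Hochschild differential, extended `k`-linearly. -/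
noncomputable def hhDiff (k : Type*) {B : Type*} [CommRing k] (deg : B → ℤ) :
    ((Option B × List B) →₀ k) →ₗ[k] ((Option B × List B) →₀ k) :=
  Finsupp.lift _ k _ (hhD deg)


section aux
variable {k B : Type*} [CommRing k] (deg : B → ℤ)

lemma lift_single {X M : Type*} [AddCommMonoid M] [Module k M] (f : X → M) (a : X) (c : k) :
    Finsupp.lift M k X f (Finsupp.single a c) = c • f a := by
  simp [Finsupp.lift_apply, Finsupp.sum_single_index]

/-- projection to the `none` part. -/
noncomputable def pN : ((Option B × List B) →₀ k) →ₗ[k] (List B →₀ k) :=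
  Finsupp.lift _ k _ fun g => match g with
    | (none, l) => Finsupp.single l 1
    | (some _, _) => 0

/-- projection to the `some` part, reindexed by nonempty words. -/
noncomputable def pS : ((Option B × List B) →₀ k) →ₗ[k] ({l : List B // l ≠ []} →₀ k) :=
  Finsupp.lift _ k _ fun g => match g with
    | (none, _) => 0
    | (some b, t) => Finsupp.single ⟨b :: t, by simp⟩ 1

noncomputable def iN : (List B →₀ k) →ₗ[k] ((Option B × List B) →₀ k) :=
  Finsupp.lmapDomain _ _ fun l => (none, l)

noncomputable def iS : ({l : List B // l ≠ []} →₀ k) →ₗ[k] ((Option B × List B) →₀ k) :=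
  Finsupp.lmapDomain _ _ fun l => (some (l.1.head l.2), l.1.tail)

noncomputable def incl : ({l : List B // l ≠ []} →₀ k) →ₗ[k] (List B →₀ k) :=
  Finsupp.lmapDomain _ _ fun l => l.1

noncomputable def proj : (List B →₀ k) →ₗ[k] ({l : List B // l ≠ []} →₀ k) :=
  Finsupp.lift _ k _ fun l => match l with
    | [] => 0
    | b :: t => Finsupp.single ⟨b :: t, by simp⟩ 1

lemma pN_iN : (pN (k := k) (B := B)).comp iN = LinearMap.id := by
  apply Finsupp.lhom_ext; intro l c
  simp [pN, iN, lift_single, Finsupp.mapDomain_single, Finsupp.smul_single]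

lemma pS_iN : (pS (k := k) (B := B)).comp iN = 0 := by
  apply Finsupp.lhom_ext; intro l c
  simp [pS, iN, lift_single, Finsupp.mapDomain_single]

lemma pN_iS : (pN (k := k) (B := B)).comp iS = 0 := by
  apply Finsupp.lhom_ext; intro l c
  simp [pN, iS, lift_single, Finsupp.mapDomain_single]

lemma pS_iS : (pS (k := k) (B := B)).comp iS = LinearMap.id := by
  apply Finsupp.lhom_ext; intro l c
  simp [pS, iS, lift_single, Finsupp.mapDomain_single, Finsupp.smul_single]

lemma decomp : (iN (k := k) (B := B)).comp pN + iS.comp pS = LinearMap.id := by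
  apply Finsupp.lhom_ext; intro g c
  obtain ⟨(_|b), l⟩ := g
  · simp [pN, pS, iN, iS, lift_single, Finsupp.mapDomain_single, Finsupp.smul_single]
  · simp [pN, pS, iN, iS, lift_single, Finsupp.mapDomain_single, Finsupp.smul_single]

lemma proj_incl : (proj (k := k) (B := B)).comp incl = LinearMap.id := by
  apply Finsupp.lhom_ext; rintro ⟨(_ | ⟨b, t⟩), h⟩ c
  · exact absurd rfl h
  · simp [proj, incl, lift_single, Finsupp.mapDomain_single, Finsupp.smul_single]

lemma incl_inj : Function.Injective (incl (k := k) (B := B)) := by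
  have : ∀ x, incl (k := k) (B := B) x = Finsupp.mapDomain Subtype.val x := fun x => rfl
  intro a b hab
  exact Finsupp.mapDomain_injective Subtype.val_injective (by rw [← this, ← this]; exact hab)

lemma iS_inj : Function.Injective (iS (k := k) (B := B)) := by
  intro a b hab
  refine Finsupp.mapDomain_injective ?_ hab
  rintro ⟨l₁, h₁⟩ ⟨l₂, h₂⟩ h
  simp only [Prod.mk.injEq, Option.some.injEq] at h
  exact Subtype.ext ((List.cons_head_tail (l := l₁) h₁).symm.trans
    (by rw [h.1, h.2]; exact List.cons_head_tail (l := l₂) h₂))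

end aux

section aux2
variable {k B : Type*} [CommRing k] (deg : B → ℤ)

lemma iS_single (l : {l : List B // l ≠ []}) (c : k) :
    iS (Finsupp.single l c) = Finsupp.single (some (l.1.head l.2), l.1.tail) c := by
  simp [iS, Finsupp.mapDomain_single]

lemma incl_single (l : {l : List B // l ≠ []}) (c : k) :
    incl (Finsupp.single l c) = Finsupp.single l.1 c := by
  simp [incl, Finsupp.mapDomain_single]

lemma hhDiff_eq : hhDiff k deg
    = iS ∘ₗ (LinearMap.id - cyclicTauPos (k := k) deg) ∘ₗ proj ∘ₗ pN := by
  apply Finsupp.lhom_ext; rintro ⟨(_ | b), (_ | ⟨a, t⟩)⟩ c <;>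
    simp [hhDiff, hhD, pN, proj, cyclicTauPos, lift_single, iS_single,
      smul_sub, ← Int.cast_smul_eq_zsmul k, smul_smul, mul_comm, ← Finsupp.single_mul, iS_single]

lemma sub_tau_eq : LinearMap.id - cyclicTau (k := k) deg
    = incl ∘ₗ (LinearMap.id - cyclicTauPos (k := k) deg) ∘ₗ proj := by
  apply Finsupp.lhom_ext; rintro (_ | ⟨a, t⟩) c <;>
    simp [cyclicTau, cyclicTauPos, proj, lift_single, incl_single,
      smul_sub, ← Int.cast_smul_eq_zsmul k, smul_smul, mul_comm, Finsupp.smul_single, ← Finsupp.single_mul, incl_single]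

end aux2

theorem HH_of_square_zero_algebra (k B : Type*) [CommRing k] (deg : B → ℤ) :
    -- it is a complex
    hhDiff k deg ∘ₗ hhDiff k deg = 0 ∧
    -- and its homology is `TV^τ ⊕ (s⁻¹ ⊗ 1)(⊕_{n≥1} TⁿV_τ)`: a surjection
    -- from cycles with kernel exactly the boundaries
    ∃ φ : LinearMap.ker (hhDiff k deg) →ₗ[k]
        (LinearMap.ker (LinearMap.id - cyclicTau (k := k) deg) ×
         (({l : List B // l ≠ []} →₀ k) ⧸
            LinearMap.range (LinearMap.id - cyclicTauPos (k := k) deg))),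
      Function.Surjective φ ∧
      LinearMap.ker φ
        = (LinearMap.range (hhDiff k deg)).comap (LinearMap.ker (hhDiff k deg)).subtype := by
  classical
  set A := LinearMap.id - cyclicTauPos (k := k) deg with hA
  have hd : ∀ x, hhDiff k deg x = iS (A (proj (pN x))) := fun x => by
    rw [hhDiff_eq deg]; rfl
  have ht : ∀ y, (LinearMap.id - cyclicTau (k := k) deg :
      (List B →₀ k) →ₗ[k] (List B →₀ k)) y = incl (A (proj y)) := fun y => by
    rw [sub_tau_eq deg]; rfl
  have hpNiN : ∀ y, pN (k := k) (B := B) (iN y) = y := fun y => LinearMap.congr_fun pN_iN y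
  have hpSiN : ∀ y, pS (k := k) (B := B) (iN y) = 0 := fun y => LinearMap.congr_fun pS_iN y
  have hpNiS : ∀ y, pN (k := k) (B := B) (iS y) = 0 := fun y => LinearMap.congr_fun pN_iS y
  have hpSiS : ∀ y, pS (k := k) (B := B) (iS y) = y := fun y => LinearMap.congr_fun pS_iS y
  have hdec : ∀ x, iN (pN x) + iS (pS (k := k) (B := B) x) = x := fun x =>
    LinearMap.congr_fun decomp x
  have hpi : ∀ y, proj (k := k) (B := B) (incl y) = y := fun y =>
    LinearMap.congr_fun proj_incl y
  refine ⟨?_, ?_⟩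
  · ext x
    simp only [LinearMap.comp_apply, LinearMap.zero_apply, hd, hpNiS, map_zero]
  · have hker : ∀ x : LinearMap.ker (hhDiff k deg),
        pN x.1 ∈ LinearMap.ker (LinearMap.id - cyclicTau (k := k) deg) := by
      rintro ⟨x, hx⟩
      rw [LinearMap.mem_ker] at hx ⊢
      have h1 : A (proj (pN x)) = 0 := iS_inj (by rw [← hd, hx, map_zero])
      rw [ht, h1, map_zero]
    set Q := LinearMap.range A with hQ
    refine ⟨LinearMap.prod
      (LinearMap.codRestrict _ (pN ∘ₗ (LinearMap.ker (hhDiff k deg)).subtype) hker)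
      (Q.mkQ ∘ₗ pS ∘ₗ (LinearMap.ker (hhDiff k deg)).subtype), ?_, ?_⟩
    · rintro ⟨⟨y, hy⟩, q⟩
      obtain ⟨z, rfl⟩ := Q.mkQ_surjective q
      have hxker : (iN y + iS z) ∈ LinearMap.ker (hhDiff k deg) := by
        rw [LinearMap.mem_ker] at hy ⊢
        have h1 : A (proj y) = 0 := incl_inj (by rw [← ht, hy, map_zero])
        rw [hd]
        simp only [map_add, hpNiN, hpNiS, add_zero, h1, map_zero]
      refine ⟨⟨iN y + iS z, hxker⟩, ?_⟩
      refine Prod.ext (Subtype.ext ?_) ?_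
      · simp only [LinearMap.prod_apply, Function.prod, LinearMap.codRestrict_apply,
          LinearMap.comp_apply, Submodule.subtype_apply, map_add, hpNiN, hpNiS, add_zero]
        show pN (iN y + iS z) = y
        simp only [map_add, hpNiN, hpNiS, add_zero]
      · simp only [LinearMap.prod_apply, Function.prod, LinearMap.comp_apply,
          Submodule.subtype_apply, map_add, hpSiN, hpSiS, zero_add]
    · ext ⟨x, hx⟩
      simp only [LinearMap.mem_ker, Submodule.mem_comap, Submodule.subtype_apply,
        LinearMap.mem_range, LinearMap.prod_apply, Function.prod, Prod.mk_eq_zero,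
        LinearMap.codRestrict_apply, LinearMap.comp_apply, Submodule.mkQ_apply,
        Submodule.Quotient.mk_eq_zero]
      constructor
      · rintro ⟨h1, h2⟩
        have h1' : pN x = 0 := congrArg Subtype.val h1
        obtain ⟨u, hu⟩ := h2
        refine ⟨iN (incl u), ?_⟩
        rw [hd, hpNiN, hpi, hu]
        have := hdec x
        rw [h1', map_zero, zero_add] at this
        exact this
      · rintro ⟨w, hw⟩
        refine ⟨Subtype.ext ?_, ?_⟩
        · show pN x = _
          rw [← hw, hd, hpNiS]; rfl
        · rw [← hw, hd, hpSiS]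
          exact ⟨proj (pN w), rfl⟩
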